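/- Let G₁ and G₂ be groups. The kernel of the canonical homomorphism from the free product G₁ ∗ G₂ to the direct product G₁ × G₂ (induced by the inclusions of G₁ and G₂ into G₁ × G₂) is a free group, and it is generated by the set of commutators { g₁ g₂ g₁⁻¹ g₂⁻¹ : g₁ ∈ G₁, g₂ ∈ G₂ } (viewed as elements of G₁ ∗ G₂). -/

import Mathlib

open Monoid

namespace Stmt4Aux

variable {G₁ G₂ : Type} [Group G₁] [Group G₂]

/-- The commutator `[inl a, inr b]` in the coproduct. -/
def c (a : G₁) (b : G₂) : Coprod G₁ G₂ :=
  Coprod.inl a * Coprod.inr b * (Coprod.inl a)⁻¹ * (Coprod.inr b)⁻¹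

@[simp] lemma c_one_left (b : G₂) : c (1 : G₁) b = 1 := by simp [c]
@[simp] lemma c_one_right (a : G₁) : c a (1 : G₂) = 1 := by simp [c]

/-- The index set for the free group: nontrivial pairs. -/
abbrev S (G₁ G₂ : Type) [Group G₁] [Group G₂] :=
  {p : G₁ × G₂ // p.1 ≠ 1 ∧ p.2 ≠ 1}

abbrev F (G₁ G₂ : Type) [Group G₁] [Group G₂] := FreeGroup (S G₁ G₂)

open Classical in
/-- The generator corresponding to a pair, or `1` if the pair is degenerate. -/
noncomputable def br (a : G₁) (b : G₂) : F G₁ G₂ :=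
  if h : a ≠ 1 ∧ b ≠ 1 then FreeGroup.of ⟨(a, b), h⟩ else 1

@[simp] lemma br_one_left (b : G₂) : br (1 : G₁) b = 1 := by simp [br]
@[simp] lemma br_one_right (a : G₁) : br a (1 : G₂) = 1 := by simp [br]

lemma br_of (s : S G₁ G₂) : br s.1.1 s.1.2 = FreeGroup.of s := by
  simp only [br, dif_pos s.2]

/-- The map sending each generator to the corresponding commutator. -/
noncomputable def φ : F G₁ G₂ →* Coprod G₁ G₂ :=
  FreeGroup.lift fun s => c s.1.1 s.1.2

@[simp] lemma φ_br (a : G₁) (b : G₂) : φ (br a b) = c a b := by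
  by_cases h : a ≠ 1 ∧ b ≠ 1
  · rw [show br a b = FreeGroup.of (⟨(a,b), h⟩ : S G₁ G₂) from dif_pos h]
    simp [φ]
  · rcases not_and_or.mp h with h1 | h1 <;> rw [not_not] at h1 <;> subst h1 <;> simp

/-- Formal conjugation by `inl h⁻¹`. -/
noncomputable def A (h : G₁) : F G₁ G₂ →* F G₁ G₂ :=
  FreeGroup.lift fun s => br (h⁻¹ * s.1.1) s.1.2 * (br h⁻¹ s.1.2)⁻¹

/-- Formal conjugation by `inr k⁻¹`. -/
noncomputable def B (k : G₂) : F G₁ G₂ →* F G₁ G₂ :=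
  FreeGroup.lift fun s => (br s.1.1 k⁻¹)⁻¹ * br s.1.1 (k⁻¹ * s.1.2)

lemma A_br (h : G₁) (u : G₁) (v : G₂) :
    A h (br u v) = br (h⁻¹ * u) v * (br h⁻¹ v)⁻¹ := by
  by_cases hc : u ≠ 1 ∧ v ≠ 1
  · rw [show br u v = FreeGroup.of (⟨(u, v), hc⟩ : S G₁ G₂) from dif_pos hc]
    simp [A]
  · rcases not_and_or.mp hc with h1 | h1 <;> rw [not_not] at h1 <;> subst h1 <;> simp

lemma B_br (k : G₂) (u : G₁) (v : G₂) :
    B k (br u v) = (br u k⁻¹)⁻¹ * br u (k⁻¹ * v) := by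
  by_cases hc : u ≠ 1 ∧ v ≠ 1
  · rw [show br u v = FreeGroup.of (⟨(u, v), hc⟩ : S G₁ G₂) from dif_pos hc]
    simp [B]
  · rcases not_and_or.mp hc with h1 | h1 <;> rw [not_not] at h1 <;> subst h1 <;> simp

lemma A_one (x : F G₁ G₂) : A (1 : G₁) x = x := by
  have : (A (1 : G₁) : F G₁ G₂ →* F G₁ G₂) = MonoidHom.id _ := by
    apply FreeGroup.ext_hom; intro s
    rw [MonoidHom.id_apply, ← br_of s, A_br]
    simp
  rw [this]; rfl

lemma B_one (x : F G₁ G₂) : B (1 : G₂) x = x := by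
  have : (B (1 : G₂) : F G₁ G₂ →* F G₁ G₂) = MonoidHom.id _ := by
    apply FreeGroup.ext_hom; intro s
    rw [MonoidHom.id_apply, ← br_of s, B_br]
    simp
  rw [this]; rfl

lemma A_A (h h' : G₁) (x : F G₁ G₂) : A h' (A h x) = A (h * h') x := by
  have : ((A h').comp (A h) : F G₁ G₂ →* F G₁ G₂) = A (h * h') := by
    apply FreeGroup.ext_hom; intro s
    rw [MonoidHom.comp_apply, ← br_of s, A_br, map_mul, map_inv, A_br, A_br, A_br]
    rw [mul_inv_rev, mul_assoc, ← mul_assoc h'⁻¹ h⁻¹, ← mul_inv_rev]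
    group
  exact DFunLike.congr_fun this x

lemma B_B (k k' : G₂) (x : F G₁ G₂) : B k' (B k x) = B (k * k') x := by
  have : ((B k').comp (B k) : F G₁ G₂ →* F G₁ G₂) = B (k * k') := by
    apply FreeGroup.ext_hom; intro s
    rw [MonoidHom.comp_apply, ← br_of s]
    simp only [map_mul, map_inv, B_br, mul_inv_rev, mul_assoc]
    group
  exact DFunLike.congr_fun this x

lemma φ_A (h : G₁) (x : F G₁ G₂) :
    φ (A h x) = (Coprod.inl h)⁻¹ * φ x * Coprod.inl h := by
  have : (φ.comp (A h) : F G₁ G₂ →* Coprod G₁ G₂)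
      = ((MulAut.conj (Coprod.inl h)⁻¹).toMonoidHom.comp φ) := by
    apply FreeGroup.ext_hom; intro s
    simp only [MonoidHom.comp_apply, MulEquiv.coe_toMonoidHom, MulAut.conj_apply, inv_inv]
    rw [← br_of s]
    simp only [map_mul, map_inv, A_br, φ_br, c]
    group
  have := DFunLike.congr_fun this x
  simpa using this

lemma φ_B (k : G₂) (x : F G₁ G₂) :
    φ (B k x) = (Coprod.inr k)⁻¹ * φ x * Coprod.inr k := by
  have : (φ.comp (B k) : F G₁ G₂ →* Coprod G₁ G₂)
      = ((MulAut.conj (Coprod.inr k)⁻¹).toMonoidHom.comp φ) := by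
    apply FreeGroup.ext_hom; intro s
    simp only [MonoidHom.comp_apply, MulEquiv.coe_toMonoidHom, MulAut.conj_apply, inv_inv]
    rw [← br_of s]
    simp only [map_mul, map_inv, B_br, φ_br, c]
    group
  have := DFunLike.congr_fun this x
  simpa using this

/-- The state space: `(a, b, x)` represents `inl a * inr b * φ x`. -/
abbrev X (G₁ G₂ : Type) [Group G₁] [Group G₂] := G₁ × G₂ × F G₁ G₂

/-- Right multiplication by `inl h⁻¹` on states. -/
noncomputable def f₁ : G₁ →* Function.End (X G₁ G₂) where
  toFun h := fun p => (p.1 * h⁻¹, p.2.1, (br h p.2.1⁻¹)⁻¹ * A h⁻¹ p.2.2)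
  map_one' := by
    funext p
    show (p.1 * (1:G₁)⁻¹, p.2.1, (br (1:G₁) p.2.1⁻¹)⁻¹ * A (1:G₁)⁻¹ p.2.2) = p
    simp [A_one]
  map_mul' h h' := by
    funext p
    show _ = ((_, _, _) : X G₁ G₂)
    refine Prod.ext (by simp [mul_assoc]) (Prod.ext rfl ?_)
    show (br (h * h') p.2.1⁻¹)⁻¹ * A (h * h')⁻¹ p.2.2
        = (br h p.2.1⁻¹)⁻¹ * A h⁻¹ ((br h' p.2.1⁻¹)⁻¹ * A h'⁻¹ p.2.2)
    rw [map_mul, map_inv, A_br, A_A, inv_inv, mul_inv_rev]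
    group

/-- Right multiplication by `inr k⁻¹` on states. -/
noncomputable def f₂ : G₂ →* Function.End (X G₁ G₂) where
  toFun k := fun p => (p.1, p.2.1 * k⁻¹, B k⁻¹ p.2.2)
  map_one' := by
    funext p
    show (p.1, p.2.1 * (1:G₂)⁻¹, B (1:G₂)⁻¹ p.2.2) = p
    simp [B_one]
  map_mul' k k' := by
    funext p
    show _ = ((_, _, _) : X G₁ G₂)
    refine Prod.ext rfl (Prod.ext (by simp [mul_assoc]) ?_)
    show B (k * k')⁻¹ p.2.2 = B k⁻¹ (B k'⁻¹ p.2.2)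
    rw [B_B]
    congr 1
    group

lemma f₁_apply (h : G₁) (p : X G₁ G₂) : (f₁ h : Function.End (X G₁ G₂)) p
    = (p.1 * h⁻¹, p.2.1, (br h p.2.1⁻¹)⁻¹ * A h⁻¹ p.2.2) := rfl

lemma f₂_apply (k : G₂) (p : X G₁ G₂) : (f₂ k : Function.End (X G₁ G₂)) p
    = (p.1, p.2.1 * k⁻¹, B k⁻¹ p.2.2) := rfl

/-- The rewriting action. -/
noncomputable def L : Coprod G₁ G₂ →* Function.End (X G₁ G₂) := Coprod.lift f₁ f₂

/-- Semantics of a state. -/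
noncomputable def sem (p : X G₁ G₂) : Coprod G₁ G₂ :=
  Coprod.inl p.1 * Coprod.inr p.2.1 * φ p.2.2

lemma sem_L (w : Coprod G₁ G₂) : ∀ p : X G₁ G₂, sem (L w p) = sem p * w⁻¹ := by
  induction w using Coprod.induction_on with
  | inl h =>
    intro p
    show sem (f₁ h p) = _
    rw [f₁_apply]
    unfold sem
    simp only [map_mul, map_inv, φ_br, φ_A, c, inv_inv]
    group
  | inr k =>
    intro p
    show sem (f₂ k p) = _
    rw [f₂_apply]
    unfold sem
    simp only [map_mul, map_inv, φ_B, inv_inv]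
    group
  | mul x y hx hy =>
    intro p
    rw [map_mul]
    show sem (L x (L y p)) = _
    rw [hx, hy, mul_inv_rev, mul_assoc]

lemma sem_triv : sem ((1, 1, 1) : X G₁ G₂) = 1 := by
  simp [sem]

/-- Decomposition: every `w` equals `inl a * inr b * φ x` with `(a,b,x) = L w⁻¹ (1,1,1)`. -/
lemma decomp (w : Coprod G₁ G₂) : sem (L w⁻¹ ((1, 1, 1) : X G₁ G₂)) = w := by
  rw [sem_L, sem_triv, one_mul, inv_inv]

lemma toProd_φ (x : F G₁ G₂) : Coprod.toProd (φ x) = 1 := by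
  have : (Coprod.toProd.comp (φ) : F G₁ G₂ →* G₁ × G₂) = 1 := by
    apply FreeGroup.ext_hom; intro s
    simp only [MonoidHom.comp_apply, φ, FreeGroup.lift_apply_of, c, map_mul, map_inv,
      Coprod.toProd_apply_inl, Coprod.toProd_apply_inr, MonoidHom.one_apply]
    ext <;> simp
  exact DFunLike.congr_fun this x

lemma toProd_sem (p : X G₁ G₂) : Coprod.toProd (sem p) = (p.1, p.2.1) := by
  unfold sem
  rw [map_mul, map_mul, toProd_φ, mul_one, Coprod.toProd_apply_inl, Coprod.toProd_apply_inr]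
  ext <;> simp

/-- Key commutation identity. -/
lemma key (g₁ : G₁) (g₂ : G₂) (y : F G₁ G₂) :
    B g₂⁻¹ (A g₁⁻¹ (B g₂ (A g₁ y))) = (br g₁ g₂)⁻¹ * y * br g₁ g₂ := by
  have : (((B g₂⁻¹).comp ((A g₁⁻¹).comp ((B g₂).comp (A g₁)))) : F G₁ G₂ →* F G₁ G₂)
      = (MulAut.conj (br g₁ g₂)⁻¹ : F G₁ G₂ ≃* F G₁ G₂).toMonoidHom := by
    apply FreeGroup.ext_hom; intro s
    obtain ⟨⟨u, v⟩, hu, hv⟩ := s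
    simp only [MonoidHom.comp_apply, MulEquiv.coe_toMonoidHom, MulAut.conj_apply]
    rw [← br_of ⟨(u,v), hu, hv⟩]
    simp only [map_mul, map_inv, A_br, B_br, inv_inv, mul_inv_cancel, inv_mul_cancel,
      mul_inv_cancel_left, inv_mul_cancel_left, br_one_left, br_one_right, one_mul, mul_one,
      inv_one]
    group
  have := DFunLike.congr_fun this y
  simpa using this

lemma act_c (g₁ : G₁) (g₂ : G₂) (y : F G₁ G₂) :
    L (c g₁ g₂)⁻¹ ((1, 1, y) : X G₁ G₂) = (1, 1, y * br g₁ g₂) := by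
  have hc : (c g₁ g₂)⁻¹
      = Coprod.inr g₂ * Coprod.inl g₁ * Coprod.inr g₂⁻¹ * Coprod.inl g₁⁻¹ := by
    simp only [c, map_inv]; group
  rw [hc, map_mul, map_mul, map_mul]
  show (L (Coprod.inr g₂)) ((L (Coprod.inl g₁)) ((L (Coprod.inr g₂⁻¹)) ((L (Coprod.inl g₁⁻¹))
    (1, 1, y)))) = _
  have h₁ : ∀ h : G₁, L (Coprod.inl h) = (f₁ h : Function.End (X G₁ G₂)) := fun h =>
    Coprod.lift_apply_inl f₁ f₂ h
  have h₂ : ∀ k : G₂, L (Coprod.inr k) = (f₂ k : Function.End (X G₁ G₂)) := fun k =>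
    Coprod.lift_apply_inr f₁ f₂ k
  rw [h₁, h₂, h₁, h₂]
  show (f₂ g₂ : Function.End (X G₁ G₂)) ((f₁ g₁) ((f₂ g₂⁻¹) ((f₁ g₁⁻¹) (1, 1, y)))) = _
  simp only [f₁_apply, f₂_apply, inv_inv, one_mul, inv_one,
    br_one_right, mul_inv_cancel]
  refine Prod.ext (by simp) (Prod.ext (by simp) ?_)
  simp only [map_mul, map_inv, B_br, key, inv_inv, mul_inv_cancel, br_one_right, inv_one,
    mul_one, one_mul, mul_inv_rev]
  group

lemma L_cancel (a : Coprod G₁ G₂) (p : X G₁ G₂) : L a (L a⁻¹ p) = p := by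
  have h : (L a * L a⁻¹ : Function.End (X G₁ G₂)) = 1 := by
    rw [← map_mul, mul_inv_cancel, map_one]
  calc L a (L a⁻¹ p) = (L a * L a⁻¹ : Function.End (X G₁ G₂)) p := rfl
    _ = (1 : Function.End (X G₁ G₂)) p := by rw [h]
    _ = p := rfl

lemma act_φ (x : F G₁ G₂) :
    ∀ y : F G₁ G₂, L (φ x)⁻¹ ((1, 1, y) : X G₁ G₂) = (1, 1, y * x) := by
  induction x using FreeGroup.induction_on with
  | C1 =>
    intro y
    rw [map_one, inv_one, map_one]
    show ((1 : G₁), (1 : G₂), y) = ((1 : G₁), (1 : G₂), y * 1)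
    rw [mul_one]
  | of s =>
    intro y
    have hφ : φ (FreeGroup.of s) = c s.1.1 s.1.2 := FreeGroup.lift_apply_of
    have hb : br s.1.1 s.1.2 = FreeGroup.of s := br_of s
    show L (φ (FreeGroup.of s))⁻¹ ((1, 1, y) : X G₁ G₂) = (1, 1, y * FreeGroup.of s)
    rw [hφ, act_c, hb]
  | inv_of s ih =>
    intro y
    have h1 := ih (y * (FreeGroup.of s)⁻¹)
    rw [inv_mul_cancel_right] at h1
    have h2 := congrArg (L (φ (FreeGroup.of s))) h1
    rw [L_cancel] at h2
    have h3 : (φ ((FreeGroup.of s)⁻¹))⁻¹ = φ (FreeGroup.of s) := by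
      rw [map_inv, inv_inv]
    rw [h3]
    exact h2.symm
  | mul a b iha ihb =>
    intro y
    rw [map_mul, mul_inv_rev, map_mul]
    show L (φ b)⁻¹ (L (φ a)⁻¹ ((1, 1, y) : X G₁ G₂)) = _
    rw [iha, ihb, mul_assoc]

lemma φ_inj : Function.Injective (φ : F G₁ G₂ →* Coprod G₁ G₂) := by
  intro x x' h
  have h1 := act_φ x 1
  have h2 := act_φ x' 1
  rw [h] at h1
  have := h1.symm.trans h2
  simpa using this

lemma toProd_c (g₁ : G₁) (g₂ : G₂) : Coprod.toProd (c g₁ g₂) = 1 := by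
  simp only [c, map_mul, map_inv, Coprod.toProd_apply_inl, Coprod.toProd_apply_inr]
  ext <;> simp

end Stmt4Aux

theorem stmt_4 (G₁ G₂ : Type) [Group G₁] [Group G₂] :
    IsFreeGroup (Monoid.Coprod.toProd : Monoid.Coprod G₁ G₂ →* G₁ × G₂).ker ∧
      (Monoid.Coprod.toProd : Monoid.Coprod G₁ G₂ →* G₁ × G₂).ker =
        Subgroup.closure { w : Monoid.Coprod G₁ G₂ | ∃ (g₁ : G₁) (g₂ : G₂),
          w = Monoid.Coprod.inl g₁ * Monoid.Coprod.inr g₂ *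
            (Monoid.Coprod.inl g₁)⁻¹ * (Monoid.Coprod.inr g₂)⁻¹ } := by
  open Stmt4Aux in
  have hker_range : (Monoid.Coprod.toProd : Monoid.Coprod G₁ G₂ →* G₁ × G₂).ker
      = (φ : F G₁ G₂ →* Monoid.Coprod G₁ G₂).range := by
    ext w
    constructor
    · intro hw
      have hw1 : Monoid.Coprod.toProd w = 1 := MonoidHom.mem_ker.mp hw
      set p := L w⁻¹ ((1, 1, 1) : X G₁ G₂) with hp
      have hd : sem p = w := decomp w
      have ht : Monoid.Coprod.toProd w = (p.1, p.2.1) := by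
        rw [← hd]; exact toProd_sem p
      rw [hw1] at ht
      have h1 : (1 : G₁) = p.1 := congrArg Prod.fst ht
      have h2 : (1 : G₂) = p.2.1 := congrArg (fun q : G₁ × G₂ => q.2) ht
      refine MonoidHom.mem_range.mpr ⟨p.2.2, ?_⟩
      rw [← hd, sem, ← h1, ← h2]
      simp
    · intro hw
      obtain ⟨x, rfl⟩ := MonoidHom.mem_range.mp hw
      exact MonoidHom.mem_ker.mpr (toProd_φ x)
  have hrange_cl : (φ : F G₁ G₂ →* Monoid.Coprod G₁ G₂).range
      = Subgroup.closure (Set.range fun s : S G₁ G₂ => c s.1.1 s.1.2) :=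
    FreeGroup.range_lift_eq_closure
  have hsub : (Set.range fun s : S G₁ G₂ => c s.1.1 s.1.2) ⊆
      { w : Monoid.Coprod G₁ G₂ | ∃ (g₁ : G₁) (g₂ : G₂),
          w = Monoid.Coprod.inl g₁ * Monoid.Coprod.inr g₂ *
            (Monoid.Coprod.inl g₁)⁻¹ * (Monoid.Coprod.inr g₂)⁻¹ } := by
    rintro _ ⟨s, rfl⟩
    exact ⟨s.1.1, s.1.2, rfl⟩
  have hCker : { w : Monoid.Coprod G₁ G₂ | ∃ (g₁ : G₁) (g₂ : G₂),
          w = Monoid.Coprod.inl g₁ * Monoid.Coprod.inr g₂ *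
            (Monoid.Coprod.inl g₁)⁻¹ * (Monoid.Coprod.inr g₂)⁻¹ } ⊆
      ↑(Monoid.Coprod.toProd : Monoid.Coprod G₁ G₂ →* G₁ × G₂).ker := by
    rintro w ⟨g₁, g₂, rfl⟩
    exact MonoidHom.mem_ker.mpr (toProd_c g₁ g₂)
  constructor
  · rw [hker_range]
    exact IsFreeGroup.ofMulEquiv (MonoidHom.ofInjective φ_inj)
  · refine le_antisymm ?_ ((Subgroup.closure_le _).mpr hCker)
    rw [hker_range, hrange_cl]
    exact Subgroup.closure_mono hsub
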